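/- For m ≥ 1, let T_m denote the m×m real symmetric tridiagonal matrix with diagonal entries α_1, …, α_m and off-diagonal entries β_2, …, β_m, and let T_{m+1} be its (m+1)×(m+1) extension with additional diagonal entry α_{m+1} and off-diagonal entry β_{m+1}. Let z ∈ ℂ be such that T_m − z·I and T_{m+1} − z·I are invertible. Then ((T_{m+1} − z·I)⁻¹)_{1,1} − ((T_m − z·I)⁻¹)_{1,1} = −β_{m+1}·((T_{m+1} − z·I)⁻¹)_{m+1,1}·((T_m − z·I)⁻¹)_{m,1}. -/

import Mathlib

open Matrix

/-- The `m × m` Jacobi (real symmetric tridiagonal) matrix with diagonal entries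
`α 1, …, α m` and off-diagonal entries `β 2, …, β m`, viewed as a complex matrix
(all entries are real). Indices of the matrix are zero-based. -/
noncomputable def jacobiC (a b : ℕ → ℝ) (m : ℕ) : Matrix (Fin m) (Fin m) ℂ :=
  Matrix.of fun i j =>
    if (i : ℕ) = (j : ℕ) then (a ((i : ℕ) + 1) : ℂ)
    else if (i : ℕ) + 1 = (j : ℕ) then (b ((i : ℕ) + 2) : ℂ)
    else if (j : ℕ) + 1 = (i : ℕ) then (b ((j : ℕ) + 2) : ℂ)
    else 0

theorem stmt6 (m : ℕ) (hm : 1 ≤ m) (α β : ℕ → ℝ) (z : ℂ)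
    (hinv : IsUnit (jacobiC α β m - z • (1 : Matrix (Fin m) (Fin m) ℂ)).det)
    (hinv' :
      IsUnit (jacobiC α β (m + 1) - z • (1 : Matrix (Fin (m + 1)) (Fin (m + 1)) ℂ)).det) :
    ((jacobiC α β (m + 1) - z • 1)⁻¹) 0 0 - ((jacobiC α β m - z • 1)⁻¹) ⟨0, hm⟩ ⟨0, hm⟩
      = -(β (m + 1) : ℂ) * (((jacobiC α β (m + 1) - z • 1)⁻¹) (Fin.last m) 0)
          * (((jacobiC α β m - z • 1)⁻¹) ⟨m - 1, by omega⟩ ⟨0, hm⟩) := by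
  classical
  set B : Matrix (Fin m) (Fin m) ℂ := jacobiC α β m - z • 1 with hB
  set M : Matrix (Fin (m+1)) (Fin (m+1)) ℂ := jacobiC α β (m+1) - z • 1 with hMdef
  set i0 : Fin m := ⟨0, hm⟩
  set i1 : Fin m := ⟨m - 1, by omega⟩
  set c : ℂ := (β (m+1) : ℂ) with hc
  set u : Matrix (Fin m) (Fin 1) ℂ := Matrix.of fun i _ => if i = i1 then c else 0 with hu
  set v : Matrix (Fin 1) (Fin m) ℂ := Matrix.of fun _ j => if j = i1 then c else 0 with hv
  set d : Matrix (Fin 1) (Fin 1) ℂ := Matrix.of fun _ _ => (α (m+1) : ℂ) - z with hd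
  set e : Fin m ⊕ Fin 1 ≃ Fin (m+1) := finSumFinEquiv with he
  letI iB : Invertible B := Matrix.invertibleOfIsUnitDet B hinv
  letI iM : Invertible M := Matrix.invertibleOfIsUnitDet M hinv'
  -- the big matrix as a block matrix
  have hsub : M.submatrix e e = Matrix.fromBlocks B u v d := by
    ext i j
    cases i with
    | inl i =>
      cases j with
      | inl j =>
        have hij : e (Sum.inl i) = e (Sum.inl j) ↔ i = j := by
          constructor
          · intro h
            have := congrArg (Fin.val) h
            simpa [he, finSumFinEquiv, Fin.ext_iff] using this
          · intro h; rw [h]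
        simp only [Matrix.submatrix_apply, hMdef, hB, Matrix.sub_apply, Matrix.smul_apply,
          Matrix.one_apply, Matrix.fromBlocks_apply₁₁, jacobiC, Matrix.of_apply]
        have h1 : ((e (Sum.inl i) : Fin (m+1)) : ℕ) = (i : ℕ) := by
          simp [he, finSumFinEquiv]
        have h2 : ((e (Sum.inl j) : Fin (m+1)) : ℕ) = (j : ℕ) := by
          simp [he, finSumFinEquiv]
        rw [h1, h2]
        by_cases h : e (Sum.inl i) = e (Sum.inl j)
        · simp [h, hij.mp h]
        · have : ¬ i = j := fun hh => h (by rw [hh])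
          simp [h, this]
      | inr j =>
        have h1 : ((e (Sum.inl i) : Fin (m+1)) : ℕ) = (i : ℕ) := by
          simp [he, finSumFinEquiv]
        have h2 : ((e (Sum.inr j) : Fin (m+1)) : ℕ) = m := by
          simp [he, finSumFinEquiv, Subsingleton.elim j 0]
        have hne : e (Sum.inl i) ≠ e (Sum.inr j) := by
          intro h
          have := congrArg (Fin.val) h
          rw [h1, h2] at this; omega
        simp only [Matrix.submatrix_apply, hMdef, Matrix.sub_apply, Matrix.smul_apply,
          Matrix.one_apply, Matrix.fromBlocks_apply₁₂, jacobiC, Matrix.of_apply, hu]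
        rw [h1, h2]
        have him : ¬ (i : ℕ) = m := by omega
        have him2 : ¬ m + 1 = (i : ℕ) := by omega
        by_cases hh : (i : ℕ) + 1 = m
        · have hii : i = i1 := by
            apply Fin.ext; simp only [i1]; omega
          have e0 : ¬ (m - 1 = m) := by omega
          have e1 : m - 1 + 1 = m := by omega
          have e2 : m - 1 + 2 = m + 1 := by omega
          simp [him, him2, hh, hii, hne, hc, e0, e1, e2, i1]
        · have : ¬ i = i1 := by
            intro hcon
            apply hh
            have := congrArg (Fin.val) hcon
            simp [i1] at this; omega
          simp [him, him2, hh, this, hne]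
    | inr i =>
      cases j with
      | inl j =>
        have h1 : ((e (Sum.inr i) : Fin (m+1)) : ℕ) = m := by
          simp [he, finSumFinEquiv, Subsingleton.elim i 0]
        have h2 : ((e (Sum.inl j) : Fin (m+1)) : ℕ) = (j : ℕ) := by
          simp [he, finSumFinEquiv]
        have hne : e (Sum.inr i) ≠ e (Sum.inl j) := by
          intro h
          have := congrArg (Fin.val) h
          rw [h1, h2] at this; omega
        simp only [Matrix.submatrix_apply, hMdef, Matrix.sub_apply, Matrix.smul_apply,
          Matrix.one_apply, Matrix.fromBlocks_apply₂₁, jacobiC, Matrix.of_apply, hv]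
        rw [h1, h2]
        have him : ¬ m = (j : ℕ) := by omega
        have him2 : ¬ m + 1 = (j : ℕ) := by omega
        by_cases hh : (j : ℕ) + 1 = m
        · have hjj : j = i1 := by
            apply Fin.ext; simp only [i1]; omega
          have e0 : ¬ (m = m - 1) := by omega
          have e0' : ¬ (m + 1 = m - 1) := by omega
          have e1 : m - 1 + 1 = m := by omega
          have e2 : m - 1 + 2 = m + 1 := by omega
          simp [him, him2, hh, hjj, hne, hc, e0, e0', e1, e2, i1]
        · have : ¬ j = i1 := by
            intro hcon
            apply hh
            have := congrArg (Fin.val) hcon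
            simp [i1] at this; omega
          simp [him, him2, hh, this, hne]
      | inr j =>
        have h1 : ((e (Sum.inr i) : Fin (m+1)) : ℕ) = m := by
          simp [he, finSumFinEquiv, Subsingleton.elim i 0]
        have h2 : ((e (Sum.inr j) : Fin (m+1)) : ℕ) = m := by
          simp [he, finSumFinEquiv, Subsingleton.elim j 0]
        have heq : e (Sum.inr i) = e (Sum.inr j) := by
          apply Fin.ext; rw [h1, h2]
        simp only [Matrix.submatrix_apply, hMdef, Matrix.sub_apply, Matrix.smul_apply,
          Matrix.one_apply, Matrix.fromBlocks_apply₂₂, jacobiC, Matrix.of_apply, hd]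
        rw [h1, h2]
        simp [heq]
  letI iMs : Invertible (M.submatrix e e) := Matrix.submatrixEquivInvertible M e e
  letI iF : Invertible (Matrix.fromBlocks B u v d) := iMs.copy _ hsub.symm
  letI iS : Invertible (d - v * ⅟B * u) :=
    Matrix.invertibleOfFromBlocks₁₁Invertible B u v d
  have hblock := Matrix.invOf_fromBlocks₁₁_eq B u v d
  -- relate ⅟M entries with block entries
  have hMs : ⅟(M.submatrix e e) = (⅟M).submatrix e e :=
    Matrix.invOf_submatrix_equiv_eq M e e
  have hFM : ⅟(Matrix.fromBlocks B u v d) = (⅟M).submatrix e e := by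
    rw [← hMs]; congr 1
  set s : ℂ := (⅟(d - v * ⅟B * u)) 0 0 with hs
  -- entry (0,0) of big inverse
  have h00 : e (Sum.inl i0) = (0 : Fin (m+1)) := by
    apply Fin.ext; simp [he, finSumFinEquiv, i0]
  have hlast : e (Sum.inr 0) = Fin.last m := by
    apply Fin.ext; simp [he, finSumFinEquiv]
  have hMinv : M⁻¹ = ⅟M := (Matrix.invOf_eq_nonsing_inv M).symm
  have hBinv : B⁻¹ = ⅟B := (Matrix.invOf_eq_nonsing_inv B).symm
  have hsum1 : ∀ i j : Fin m, (⅟B * u * ⅟(d - v * ⅟B * u) * v * ⅟B) i j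
      = ⅟B i i1 * c * s * c * ⅟B i1 j := by
    intro i j
    simp [Matrix.mul_apply, hu, hv, Fin.sum_univ_one, mul_ite, ite_mul, mul_zero, zero_mul,
      Finset.sum_ite_eq', hs, Finset.sum_mul, Finset.mul_sum]
  have hsum2 : ∀ j : Fin m, (⅟(d - v * ⅟B * u) * v * ⅟B) 0 j = s * c * ⅟B i1 j := by
    intro j
    simp [Matrix.mul_apply, hv, Fin.sum_univ_one, mul_ite, ite_mul, mul_zero, zero_mul,
      Finset.sum_ite_eq', hs, Finset.sum_mul, Finset.mul_sum]
  have hA : M⁻¹ 0 0 = ⅟B i0 i0 + ⅟B i0 i1 * c * s * c * ⅟B i1 i0 := by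
    rw [hMinv, ← h00]
    have : (⅟M) (e (Sum.inl i0)) (e (Sum.inl i0))
        = (⅟(Matrix.fromBlocks B u v d)) (Sum.inl i0) (Sum.inl i0) := by
      rw [hFM]; rfl
    rw [this, hblock]
    simp only [Matrix.fromBlocks_apply₁₁, Matrix.add_apply]
    rw [hsum1 i0 i0]
  have hC : M⁻¹ (Fin.last m) 0 = -(s * c * ⅟B i1 i0) := by
    rw [hMinv, ← h00, ← hlast]
    have : (⅟M) (e (Sum.inr 0)) (e (Sum.inl i0))
        = (⅟(Matrix.fromBlocks B u v d)) (Sum.inr 0) (Sum.inl i0) := by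
      rw [hFM]; rfl
    rw [this, hblock]
    simp only [Matrix.fromBlocks_apply₂₁, Matrix.neg_apply]
    rw [hsum2 i0]
  -- symmetry of B and hence of its inverse
  have hBsymm : Bᵀ = B := by
    ext i j
    simp only [hB, Matrix.transpose_apply, Matrix.sub_apply, Matrix.smul_apply,
      Matrix.one_apply, jacobiC, Matrix.of_apply]
    by_cases h1 : (i : ℕ) = (j : ℕ)
    · have : i = j := Fin.ext h1
      simp [this]
    · have h1' : ¬ (j : ℕ) = (i : ℕ) := fun h => h1 h.symm
      have hne : ¬ j = i := fun h => h1' (congrArg Fin.val h)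
      have hne' : ¬ i = j := fun h => h1 (congrArg Fin.val h)
      by_cases h2 : (i : ℕ) + 1 = (j : ℕ)
      · have h3 : ¬ (j : ℕ) + 1 = (i : ℕ) := by omega
        simp [h1, h1', h2, h3, hne, hne']
      · by_cases h3 : (j : ℕ) + 1 = (i : ℕ) <;> simp [h1, h1', h2, h3, hne, hne']
  have hsymm : ⅟B i0 i1 = ⅟B i1 i0 := by
    rw [← hBinv]
    have : B⁻¹ᵀ = B⁻¹ := by
      rw [Matrix.transpose_nonsing_inv, hBsymm]
    calc B⁻¹ i0 i1 = B⁻¹ᵀ i1 i0 := rfl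
      _ = B⁻¹ i1 i0 := by rw [this]
  rw [hA, hC, hBinv, hsymm]
  ring
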